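/- arXiv:2204.09561 — 3 statements merged into one kernel-verified Lean document; each statement's English description precedes it below -/
import Mathlib

section
/- Let Q : [0,∞) → ℝ be positive, twice differentiable, satisfying Q'' + (1/r)Q' + (2/(p-2))Q^(p-1) - (2/(p-2))Q = 0 with Q'(0)=0 and Q(r), Q'(r) → 0 as r → ∞. Then Q(0) ≥ (p/2)^(1/(p-2)). -/
open Real Filter Set

theorem stmt1 (p : ℝ) (hp : 2 < p) (Q : ℝ → ℝ)
    (hQpos : ∀ r : ℝ, 0 ≤ r → 0 < Q r)
    (hQdiff : ∀ r : ℝ, 0 ≤ r → DifferentiableAt ℝ Q r)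
    (hQdiff2 : ∀ r : ℝ, 0 ≤ r → DifferentiableAt ℝ (deriv Q) r)
    (hODE : ∀ r : ℝ, 0 < r →
      deriv (deriv Q) r + (1 / r) * deriv Q r
        + (2 / (p - 2)) * Q r ^ (p - 1) - (2 / (p - 2)) * Q r = 0)
    (hQ'0 : deriv Q 0 = 0)
    (hQlim : Tendsto Q atTop (nhds 0))
    (hQ'lim : Tendsto (deriv Q) atTop (nhds 0)) :
    (p / 2) ^ (1 / (p - 2)) ≤ Q 0 := by
  have hp2 : (0:ℝ) < p - 2 := by linarith
  have hp0 : (0:ℝ) < p := by linarith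
  set E : ℝ → ℝ := fun r =>
    (1/2) * (deriv Q r)^2 + (2/(p*(p-2))) * Q r ^ p - (1/(p-2)) * (Q r)^2 with hE
  have hEderiv : ∀ r : ℝ, 0 < r → HasDerivAt E (-(deriv Q r)^2 / r) r := by
    intro r hr
    have hQ' := (hQdiff r hr.le).hasDerivAt
    have hQ'' := (hQdiff2 r hr.le).hasDerivAt
    have h1 := (hQ''.pow 2).const_mul ((1:ℝ)/2)
    have h2 := (hQ'.rpow_const (p := p) (Or.inl (hQpos r hr.le).ne')).const_mul ((2:ℝ)/(p*(p-2)))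
    have h3 := (hQ'.pow 2).const_mul ((1:ℝ)/(p-2))
    have h := (h1.add h2).sub h3
    convert h using 1
    · rfl
    · rfl
    · rfl
    have hode := hODE r hr
    have hQ''eq : deriv (deriv Q) r
        = -(1/r) * deriv Q r - (2/(p-2)) * Q r ^ (p-1) + (2/(p-2)) * Q r := by
      linarith
    rw [hQ''eq]
    push_cast
    field_simp
    ring
  have hEcont : ∀ r : ℝ, 0 ≤ r → ContinuousAt E r := by
    intro r hr
    have c1 := (hQdiff r hr).continuousAt
    have c2 := (hQdiff2 r hr).continuousAt
    have c3 : ContinuousAt (fun x => Q x ^ p) r :=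
      (Real.continuousAt_rpow_const _ _ (Or.inl (hQpos r hr).ne')).comp c1
    exact ((continuousAt_const.mul (c2.pow 2)).add (continuousAt_const.mul c3)).sub
      (continuousAt_const.mul (c1.pow 2))
  have hanti : AntitoneOn E (Ici 0) := by
    apply antitoneOn_of_deriv_nonpos (convex_Ici 0)
    · exact fun r hr => (hEcont r hr).continuousWithinAt
    · intro r hr
      rw [interior_Ici] at hr
      exact (hEderiv r hr).differentiableAt.differentiableWithinAt
    · intro r hr
      rw [interior_Ici] at hr
      rw [(hEderiv r hr).deriv]
      exact div_nonpos_of_nonpos_of_nonneg (neg_nonpos.mpr (sq_nonneg _)) hr.le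
  have hElim : Tendsto E atTop (nhds 0) := by
    have l1 : Tendsto (fun r => (1/2) * (deriv Q r)^2) atTop (nhds 0) := by
      have := (hQ'lim.pow 2).const_mul ((1:ℝ)/2)
      simpa using this
    have l2 : Tendsto (fun r => (2/(p*(p-2))) * Q r ^ p) atTop (nhds 0) := by
      have hc : ContinuousAt (fun x : ℝ => x ^ p) 0 :=
        Real.continuousAt_rpow_const 0 p (Or.inr hp0.le)
      have := (hc.tendsto.comp hQlim).const_mul ((2:ℝ)/(p*(p-2)))
      simpa [Function.comp, Real.zero_rpow hp0.ne'] using this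
    have l3 : Tendsto (fun r => (1/(p-2)) * (Q r)^2) atTop (nhds 0) := by
      have := (hQlim.pow 2).const_mul ((1:ℝ)/(p-2))
      simpa using this
    have := (l1.add l2).sub l3
    rw [hE]
    simpa using this
  have hE0 : 0 ≤ E 0 := by
    refine le_of_tendsto hElim ?_
    filter_upwards [eventually_ge_atTop (0:ℝ)] with r hr
    exact hanti (self_mem_Ici) hr hr
  have hQ0 := hQpos 0 le_rfl
  have hpow : Q 0 ^ p = Q 0 ^ (p-2) * Q 0 ^ 2 := by
    rw [← Real.rpow_natCast (Q 0) 2, ← Real.rpow_add hQ0]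
    norm_num
  have hE0' : (1/(p-2)) * (Q 0)^2 ≤ (2/(p*(p-2))) * (Q 0 ^ (p-2) * Q 0 ^ 2) := by
    have : E 0 = (2/(p*(p-2))) * Q 0 ^ p - (1/(p-2)) * (Q 0)^2 := by
      simp [hE, hQ'0]
    rw [this, hpow] at hE0
    linarith
  have q2 : (0:ℝ) < Q 0 ^ 2 := by positivity
  have key : p/2 ≤ Q 0 ^ (p-2) := by
    have hmul : (0:ℝ) < p * (p-2) := mul_pos hp0 hp2
    have h := mul_le_mul_of_nonneg_left hE0' hmul.le
    have e1 : p*(p-2) * (1/(p-2) * Q 0 ^ 2) = p * Q 0 ^ 2 := by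
      field_simp
    have e2 : p*(p-2) * (2/(p*(p-2)) * (Q 0 ^ (p-2) * Q 0 ^ 2))
        = 2 * Q 0 ^ (p-2) * Q 0 ^ 2 := by
      field_simp
    rw [e1, e2] at h
    have h6 : p ≤ 2 * Q 0 ^ (p-2) := by
      have := (mul_le_mul_iff_of_pos_right q2).mp (by linarith : p * Q 0 ^ 2 ≤ (2 * Q 0 ^ (p-2)) * Q 0 ^ 2)
      exact this
    linarith
  calc (p/2) ^ (1/(p-2)) ≤ (Q 0 ^ (p-2)) ^ (1/(p-2)) :=
        Real.rpow_le_rpow (by positivity) key (by positivity)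
    _ = Q 0 := by
        rw [← Real.rpow_mul hQ0.le, mul_one_div, div_self hp2.ne', Real.rpow_one]
end

section
/- Let X, Y be Banach spaces and f : X → Y a C¹ map. Suppose df(x₀) is invertible, and there exist κ < 1 and R > 0 such that ‖df(x₀)^{-1} ∘ df(x) − Id_X‖ ≤ κ for all x in the closed ball B(x₀, R). Then, setting r = (1−κ)R / ‖df(x₀)^{-1}‖, the closed ball B(f(x₀), r) in Y is contained in f(B(x₀, R)). -/
open Metric

theorem stmt5 {X Y : Type*} [NormedAddCommGroup X] [NormedSpace ℝ X] [CompleteSpace X]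
    [NormedAddCommGroup Y] [NormedSpace ℝ Y]
    (f : X → Y) (hf : ContDiff ℝ 1 f) (x₀ : X)
    (A : X ≃L[ℝ] Y) (hA : (A : X →L[ℝ] Y) = fderiv ℝ f x₀)
    (κ R : ℝ) (hκ : κ < 1) (hR : 0 < R)
    (hbound : ∀ x ∈ closedBall x₀ R,
      ‖(A.symm : Y →L[ℝ] X).comp (fderiv ℝ f x) - ContinuousLinearMap.id ℝ X‖ ≤ κ) :
    closedBall (f x₀) ((1 - κ) * R / ‖(A.symm : Y →L[ℝ] X)‖)
      ⊆ f '' closedBall x₀ R := by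
  have hκ0 : 0 ≤ κ :=
    (norm_nonneg _).trans (hbound x₀ (mem_closedBall_self hR.le))
  intro y hy
  rcases eq_or_lt_of_le (norm_nonneg (A.symm : Y →L[ℝ] X)) with hN | hN
  · -- degenerate case: radius is zero (division by zero)
    rw [← hN, div_zero, mem_closedBall, dist_le_zero] at hy
    exact ⟨x₀, mem_closedBall_self hR.le, hy.symm⟩
  -- work with g = A.symm ∘ f
  set g : X → X := fun x => A.symm (f x) with hg
  have hdf : ∀ x : X, HasFDerivAt f (fderiv ℝ f x) x :=
    fun x => (hf.differentiable one_ne_zero x).hasFDerivAt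
  have hdg : ∀ x : X, HasFDerivAt g ((A.symm : Y →L[ℝ] X).comp (fderiv ℝ f x)) x :=
    fun x => ((A.symm : Y →L[ℝ] X).hasFDerivAt).comp x (hdf x)
  have happrox : ApproximatesLinearOn g (ContinuousLinearMap.id ℝ X)
      (closedBall x₀ R) ⟨κ, hκ0⟩ := by
    intro x hx z hz
    exact (convex_closedBall x₀ R).norm_image_sub_le_of_norm_hasFDerivWithin_le'
      (fun w hw => (hdg w).hasFDerivWithinAt) (fun w hw => hbound w hw) hz hx
  -- a nonlinear right inverse of the identity with nnnorm 1
  let idinv : ContinuousLinearMap.NonlinearRightInverse (ContinuousLinearMap.id ℝ X) :=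
    { toFun := id
      nnnorm := 1
      bound' := fun z => by simp
      right_inv' := fun z => rfl }
  have hsurj := happrox.surjOn_closedBall_of_nonlinearRightInverse idinv hR.le subset_rfl
  have hmem : A.symm y ∈ closedBall (g x₀) (((idinv.nnnorm : ℝ)⁻¹ - (⟨κ, hκ0⟩ : NNReal)) * R) := by
    have h1 : dist (A.symm y) (g x₀) ≤ ‖(A.symm : Y →L[ℝ] X)‖ * dist y (f x₀) := by
      simpa [hg, dist_eq_norm, ← map_sub] using
        (A.symm : Y →L[ℝ] X).le_opNorm (y - f x₀)
    have h2 : dist y (f x₀) ≤ (1 - κ) * R / ‖(A.symm : Y →L[ℝ] X)‖ := mem_closedBall.1 hy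
    have h3 : ‖(A.symm : Y →L[ℝ] X)‖ * ((1 - κ) * R / ‖(A.symm : Y →L[ℝ] X)‖) = (1 - κ) * R := by
      field_simp
    have : dist (A.symm y) (g x₀) ≤ (1 - κ) * R := by
      calc dist (A.symm y) (g x₀) ≤ ‖(A.symm : Y →L[ℝ] X)‖ * dist y (f x₀) := h1
        _ ≤ ‖(A.symm : Y →L[ℝ] X)‖ * ((1 - κ) * R / ‖(A.symm : Y →L[ℝ] X)‖) :=
            mul_le_mul_of_nonneg_left h2 hN.le
        _ = (1 - κ) * R := h3
    refine mem_closedBall.2 (this.trans_eq ?_)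
    norm_num
  obtain ⟨x, hx, hgx⟩ := hsurj hmem
  refine ⟨x, hx, ?_⟩
  have : A.symm (f x) = A.symm y := hgx
  exact A.symm.injective this
end

section
/- Let A be a compact self-adjoint operator on a separable real Hilbert space whose positive eigenvalues, listed in decreasing order, satisfy λ_n⁺ ≥ C δ^{-2}/n² for all n ≥ δ^{-1}, and whose negative eigenvalues satisfy λ_n⁻ ≥ −C'/n². Assume also all eigenvalues exceed −1/2 + ε₀ for some ε₀ > 0. Then ∏_n (1 + 2(1−η)λ_n)^{-1/2} ≤ C_η e^{-c_η δ^{-1}} for any fixed η ∈ (0,1), with constants independent of δ. -/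
open Real Finset

/-- For a sequence of factors in `[0,1]`, the infinite product exists (equals the inf of
partial products), hence is bounded by any partial product. Also the product is nonneg. -/
lemma hasProd_iInf_of_le_one {f : ℕ → ℝ} (h0 : ∀ n, 0 ≤ f n) (h1 : ∀ n, f n ≤ 1) :
    HasProd f (⨅ s : Finset ℕ, ∏ i ∈ s, f i) := by
  have anti : Antitone fun s : Finset ℕ => ∏ i ∈ s, f i := by
    intro s t hst
    calc ∏ i ∈ t, f i = (∏ i ∈ t \ s, f i) * ∏ i ∈ s, f i := (Finset.prod_sdiff hst).symm
      _ ≤ 1 * ∏ i ∈ s, f i := by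
          apply mul_le_mul_of_nonneg_right _ (Finset.prod_nonneg fun i _ => h0 i)
          exact Finset.prod_le_one (fun i _ => h0 i) (fun i _ => h1 i)
      _ = ∏ i ∈ s, f i := one_mul _
  have hbdd : BddBelow (Set.range fun s : Finset ℕ => ∏ i ∈ s, f i) := by
    refine ⟨0, ?_⟩
    rintro x ⟨s, rfl⟩
    exact Finset.prod_nonneg fun i _ => h0 i
  exact tendsto_atTop_ciInf anti hbdd

lemma tprod_le_prod_of_le_one {f : ℕ → ℝ} (h0 : ∀ n, 0 ≤ f n) (h1 : ∀ n, f n ≤ 1)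
    (s : Finset ℕ) : ∏' n, f n ≤ ∏ i ∈ s, f i := by
  rw [(hasProd_iInf_of_le_one h0 h1).tprod_eq]
  refine ciInf_le ⟨0, ?_⟩ s
  rintro x ⟨t, rfl⟩
  exact Finset.prod_nonneg fun i _ => h0 i

lemma tprod_nonneg_of_le_one {f : ℕ → ℝ} (h0 : ∀ n, 0 ≤ f n) (h1 : ∀ n, f n ≤ 1) :
    0 ≤ ∏' n, f n := by
  rw [(hasProd_iInf_of_le_one h0 h1).tprod_eq]
  exact le_ciInf fun s => Finset.prod_nonneg fun i _ => h0 i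

lemma div_le_div_of_le_left_stub {a b c : ℝ} (h : a ≤ b) (hc : 0 < c) : a / c ≤ b / c := by
  gcongr

lemma hasSum_one_div_succ_sq : HasSum (fun n : ℕ => (1 : ℝ) / ((n : ℝ) + 1) ^ 2) (π ^ 2 / 6) := by
  have h := (hasSum_nat_add_iff' (f := fun n : ℕ => (1 : ℝ) / (n : ℝ) ^ 2) 1).mpr hasSum_zeta_two
  simpa using h

set_option maxHeartbeats 1000000 in
theorem stmt17 (ε₀ C C' : ℝ) (hε : 0 < ε₀) (hC : 0 < C) (hC' : 0 < C')
    (η : ℝ) (hη : 0 < η) (hη1 : η < 1) :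
    ∃ cη > (0:ℝ), ∃ Cη > (0:ℝ), ∀ δ : ℝ, 0 < δ → δ ≤ 1 →
      ∀ lp lm : ℕ → ℝ,
        Antitone lp → Monotone lm →
        (∀ n, 0 < lp n) →
        (∀ n, -(1/2) + ε₀ < lm n ∧ lm n < 0) →
        (∀ n : ℕ, δ⁻¹ ≤ ((n : ℝ) + 1) → C * δ ^ (-2 : ℤ) / ((n : ℝ) + 1) ^ 2 ≤ lp n) →
        (∀ n : ℕ, -C' / ((n : ℝ) + 1) ^ 2 ≤ lm n) →
        (∏' n : ℕ, (1 + 2 * (1 - η) * lp n) ^ (-(1/2) : ℝ)) *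
            (∏' n : ℕ, (1 + 2 * (1 - η) * lm n) ^ (-(1/2) : ℝ))
          ≤ Cη * Real.exp (-cη / δ) := by
  have hb : 0 < 1 - η := by linarith
  have hBpos : 0 < (1 - η) * C / 8 := by positivity
  have hB1 : (1:ℝ) < 1 + (1 - η) * C / 8 := by linarith
  have hlogB : 0 < Real.log (1 + (1 - η) * C / 8) := Real.log_pos hB1
  refine ⟨Real.log (1 + (1 - η) * C / 8) / 2, by positivity,
    Real.exp (3 * C' / η), Real.exp_pos _, ?_⟩
  intro δ hδ hδ1 lp lm _ _ hlp hlm hp hm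
  have hδinv : (1:ℝ) ≤ δ⁻¹ := (one_le_inv₀ hδ).mpr hδ1
  -- positive-part factors
  have hbase : ∀ n, (1:ℝ) ≤ 1 + 2 * (1 - η) * lp n := by
    intro n
    have := hlp n
    nlinarith
  have hf0 : ∀ n, 0 ≤ (1 + 2 * (1 - η) * lp n) ^ (-(1/2) : ℝ) := fun n =>
    Real.rpow_nonneg (by linarith [hbase n]) _
  have hf1 : ∀ n, (1 + 2 * (1 - η) * lp n) ^ (-(1/2) : ℝ) ≤ 1 := fun n =>
    Real.rpow_le_one_of_one_le_of_nonpos (hbase n) (by norm_num)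
  -- negative-part factors
  have hbm : ∀ n, η < 1 + 2 * (1 - η) * lm n ∧ 1 + 2 * (1 - η) * lm n ≤ 1 := by
    intro n
    obtain ⟨h1, h2⟩ := hlm n
    constructor
    · nlinarith
    · nlinarith
  have hbmpos : ∀ n, 0 < 1 + 2 * (1 - η) * lm n := fun n => lt_trans hη (hbm n).1
  have hgexp : ∀ n, (1 + 2 * (1 - η) * lm n) ^ (-(1/2) : ℝ)
      = Real.exp (-(1/2) * Real.log (1 + 2 * (1 - η) * lm n)) := by
    intro n
    rw [Real.rpow_def_of_pos (hbmpos n), mul_comm]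
  have hh0 : ∀ n, 0 ≤ -(1/2) * Real.log (1 + 2 * (1 - η) * lm n) := by
    intro n
    have : Real.log (1 + 2 * (1 - η) * lm n) ≤ 0 :=
      Real.log_nonpos (le_of_lt (hbmpos n)) (hbm n).2
    nlinarith
  have hhle : ∀ n, -(1/2) * Real.log (1 + 2 * (1 - η) * lm n)
      ≤ (C' / η) * (1 / ((n:ℝ) + 1) ^ 2) := by
    intro n
    have hb1 := (hbm n).1
    have hb2 := hbmpos n
    set x := 1 + 2 * (1 - η) * lm n with hx
    have hlog : Real.log x⁻¹ ≤ x⁻¹ - 1 := Real.log_le_sub_one_of_pos (by positivity)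
    rw [Real.log_inv] at hlog
    have hx1 : x⁻¹ - 1 = (1 - x) / x := by field_simp
    have hlm' := hm n
    have hnp : (0:ℝ) < ((n:ℝ)+1)^2 := by positivity
    have h1xle : 1 - x ≤ 2 * (1 - η) * (C' / ((n:ℝ)+1)^2) := by
      have h1x : 1 - x = 2 * (1 - η) * (- lm n) := by rw [hx]; ring
      rw [h1x]
      have hml : -lm n ≤ C' / ((n:ℝ)+1)^2 := by
        have := hm n
        have : -(C' / ((n:ℝ)+1)^2) ≤ lm n := by
          have h' := hm n
          rwa [neg_div] at h'
        linarith
      nlinarith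
    have h1xnn : 0 ≤ 1 - x := by linarith [(hbm n).2]
    have key : -Real.log x ≤ 2 * (1 - η) * (C' / ((n:ℝ)+1)^2) / η := by
      calc -Real.log x ≤ (1 - x) / x := by rw [← hx1]; exact hlog
        _ ≤ (1 - x) / η := div_le_div_of_nonneg_left h1xnn hη (le_of_lt hb1)
        _ ≤ 2 * (1 - η) * (C' / ((n:ℝ)+1)^2) / η :=
            div_le_div_of_le_left_stub h1xle hη
    have hCp : 0 < C' / ((n:ℝ)+1)^2 := by positivity
    have h2 : 2 * (1 - η) * (C' / ((n:ℝ)+1)^2) / η ≤ 2 * ((C' / η) * (1 / ((n:ℝ)+1)^2)) := by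
      rw [div_le_iff₀ hη]
      have he : (C' / η) * η = C' := by field_simp
      have hrw : 2 * ((C' / η) * (1 / ((n:ℝ)+1)^2)) * η = 2 * (C' / ((n:ℝ)+1)^2) := by
        field_simp
      rw [hrw]
      nlinarith
    nlinarith [key, h2]
  have hsum_shift : HasSum (fun n : ℕ => (1 : ℝ) / ((n:ℝ) + 1) ^ 2) (π ^ 2 / 6) :=
    hasSum_one_div_succ_sq
  have hsummaj : Summable (fun n : ℕ => (C' / η) * (1 / ((n:ℝ) + 1) ^ 2)) :=
    hsum_shift.summable.mul_left _
  have hhsum : Summable (fun n => -(1/2) * Real.log (1 + 2 * (1 - η) * lm n)) :=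
    Summable.of_nonneg_of_le hh0 hhle hsummaj
  have hQ : HasProd (fun n => (1 + 2 * (1 - η) * lm n) ^ (-(1/2) : ℝ))
      (Real.exp (∑' n, -(1/2) * Real.log (1 + 2 * (1 - η) * lm n))) := by
    have hfun : (fun n => (1 + 2 * (1 - η) * lm n) ^ (-(1/2) : ℝ))
        = fun n => Real.exp (-(1/2) * Real.log (1 + 2 * (1 - η) * lm n)) := funext hgexp
    rw [hfun]
    exact hhsum.hasSum.rexp
  have htsumle : (∑' n, -(1/2) * Real.log (1 + 2 * (1 - η) * lm n)) ≤ 3 * C' / η := by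
    have h1 := Summable.tsum_le_tsum hhle hhsum hsummaj
    have h2 : (∑' n : ℕ, (C' / η) * (1 / ((n:ℝ) + 1) ^ 2)) = (C' / η) * (π ^ 2 / 6) := by
      rw [tsum_mul_left, hsum_shift.tsum_eq]
    have hπ : π ^ 2 / 6 ≤ 3 := by nlinarith [Real.pi_le_four, Real.pi_pos]
    rw [h2] at h1
    have h3 : (C' / η) * (π ^ 2 / 6) ≤ (C' / η) * 3 :=
      mul_le_mul_of_nonneg_left hπ (by positivity)
    calc (∑' n, -(1/2) * Real.log (1 + 2 * (1 - η) * lm n))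
        ≤ (C' / η) * (π ^ 2 / 6) := h1
      _ ≤ (C' / η) * 3 := h3
      _ = 3 * C' / η := by ring
  have hQle : (∏' n, (1 + 2 * (1 - η) * lm n) ^ (-(1/2) : ℝ)) ≤ Real.exp (3 * C' / η) := by
    rw [hQ.tprod_eq]
    exact Real.exp_le_exp.mpr htsumle
  have hQ0 : 0 ≤ (∏' n, (1 + 2 * (1 - η) * lm n) ^ (-(1/2) : ℝ)) := by
    rw [hQ.tprod_eq]; positivity
  -- positive part
  set m : ℕ := ⌈δ⁻¹⌉₊ with hm'
  have hmge : δ⁻¹ ≤ (m:ℝ) := Nat.le_ceil _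
  have hmle : (m:ℝ) ≤ 2 * δ⁻¹ := by
    have h1 : (m:ℝ) < δ⁻¹ + 1 := Nat.ceil_lt_add_one (by linarith)
    linarith
  have hfle : ∀ n ∈ Finset.Ico m (2 * m), (1 + 2 * (1 - η) * lp n) ^ (-(1/2) : ℝ)
      ≤ Real.exp (-(Real.log (1 + (1 - η) * C / 8) / 2)) := by
    intro n hn
    rw [Finset.mem_Ico] at hn
    have hc1 : ((m:ℕ):ℝ) ≤ ((n:ℕ):ℝ) := Nat.cast_le.mpr hn.1
    have hc2 : ((n+1:ℕ):ℝ) ≤ ((2*m:ℕ):ℝ) := Nat.cast_le.mpr hn.2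
    push_cast at hc2
    have hn1 : δ⁻¹ ≤ (n:ℝ) + 1 := by linarith
    have hn2 : (n:ℝ) + 1 ≤ 4 * δ⁻¹ := by linarith
    have hlpn : C / 16 ≤ lp n := by
      refine le_trans ?_ (hp n hn1)
      have hδ2 : δ ^ (-2 : ℤ) = (δ⁻¹) ^ 2 := by
        rw [zpow_neg, inv_pow]
        norm_cast
      have hδi : (0:ℝ) < δ⁻¹ := by positivity
      have hsq : ((n:ℝ)+1)^2 ≤ 16 * δ⁻¹ ^ 2 := by nlinarith
      rw [hδ2, div_le_div_iff₀ (by norm_num) (by positivity)]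
      nlinarith [mul_le_mul_of_nonneg_left hsq hC.le]
    have hbase' : 1 + (1 - η) * C / 8 ≤ 1 + 2 * (1 - η) * lp n := by nlinarith
    calc (1 + 2 * (1 - η) * lp n) ^ (-(1/2) : ℝ)
        ≤ (1 + (1 - η) * C / 8) ^ (-(1/2) : ℝ) :=
          Real.rpow_le_rpow_of_nonpos (by linarith) hbase' (by norm_num)
      _ = Real.exp (-(Real.log (1 + (1 - η) * C / 8) / 2)) := by
          rw [Real.rpow_def_of_pos (by linarith)]
          congr 1
          ring
  have hPle : (∏' n, (1 + 2 * (1 - η) * lp n) ^ (-(1/2) : ℝ))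
      ≤ Real.exp (-(Real.log (1 + (1 - η) * C / 8) / 2) / δ) := by
    have hm1 : 1 ≤ m := by
      rw [hm', Nat.one_le_ceil_iff]
      linarith
    calc (∏' n, (1 + 2 * (1 - η) * lp n) ^ (-(1/2) : ℝ))
        ≤ ∏ i ∈ Finset.Ico m (2 * m), (1 + 2 * (1 - η) * lp i) ^ (-(1/2) : ℝ) :=
          tprod_le_prod_of_le_one hf0 hf1 _
      _ ≤ ∏ _i ∈ Finset.Ico m (2 * m),
            Real.exp (-(Real.log (1 + (1 - η) * C / 8) / 2)) :=
          Finset.prod_le_prod (fun i _ => hf0 i) hfle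
      _ = Real.exp (-(Real.log (1 + (1 - η) * C / 8) / 2)) ^ m := by
          rw [Finset.prod_const, Nat.card_Ico]
          congr 1
          omega
      _ = Real.exp ((m:ℝ) * (-(Real.log (1 + (1 - η) * C / 8) / 2))) := by
          rw [← Real.exp_nat_mul]
      _ ≤ Real.exp (-(Real.log (1 + (1 - η) * C / 8) / 2) / δ) := by
          apply Real.exp_le_exp.mpr
          have hinv : δ⁻¹ * δ = 1 := inv_mul_cancel₀ (ne_of_gt hδ)
          rw [le_div_iff₀ hδ]
          nlinarith [mul_le_mul_of_nonneg_right hmge hδ.le, hlogB,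
            mul_le_mul_of_nonneg_right
              (mul_le_mul_of_nonneg_right hmge hδ.le)
              (by positivity : (0:ℝ) ≤ Real.log (1 + (1 - η) * C / 8) / 2)]
  have hP0 : 0 ≤ (∏' n, (1 + 2 * (1 - η) * lp n) ^ (-(1/2) : ℝ)) :=
    tprod_nonneg_of_le_one hf0 hf1
  calc (∏' n : ℕ, (1 + 2 * (1 - η) * lp n) ^ (-(1/2) : ℝ)) *
        (∏' n : ℕ, (1 + 2 * (1 - η) * lm n) ^ (-(1/2) : ℝ))
      ≤ Real.exp (-(Real.log (1 + (1 - η) * C / 8) / 2) / δ) * Real.exp (3 * C' / η) :=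
        mul_le_mul hPle hQle hQ0 (Real.exp_pos _).le
    _ = Real.exp (3 * C' / η) *
        Real.exp (-(Real.log (1 + (1 - η) * C / 8) / 2) / δ) := mul_comm _ _
end
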